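/- Let (G, B₁, B₂) be a Rota-Baxter system of groups with descendent operation ∘ and cocycle Φ(a) = B₁(a)B₂(a). If Φ is bijective, then the map B: G → G defined by B(a) = B₂(Φ^{-1}(a))^{-1} is a Rota-Baxter operator of weight 1 on G, i.e., B(a)B(b) = B(aB(a)bB(a)^{-1}) for all a,b ∈ G. -/
import Mathlib


theorem stmt_12 {G : Type*} [Group G] (B₁ B₂ : G → G)
    (h1 : ∀ a b : G, B₁ a * B₁ b = B₁ (B₁ a * b * B₂ a))
    (h2 : ∀ a b : G, B₂ b * B₂ a = B₂ (B₁ a * b * B₂ a))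
    (Φ : G → G) (hΦ : ∀ a, Φ a = B₁ a * B₂ a)
    (Φinv : G → G) (hli : Function.LeftInverse Φinv Φ) (hri : Function.RightInverse Φinv Φ)
    (B : G → G) (hB : ∀ a, B a = (B₂ (Φinv a))⁻¹) :
    ∀ a b : G, B a * B b = B (a * B a * b * (B a)⁻¹) := by
  intro a b
  have ha : a = B₁ (Φinv a) * B₂ (Φinv a) := by rw [← hΦ, hri a]
  have hb : b = B₁ (Φinv b) * B₂ (Φinv b) := by rw [← hΦ, hri b]
  have key : a * B a * b * (B a)⁻¹
      = Φ (B₁ (Φinv a) * Φinv b * B₂ (Φinv a)) := by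
    rw [hΦ, ← h1, ← h2, hB]
    set x := Φinv a
    set y := Φinv b
    rw [ha, hb]
    group
  rw [key, hB, hB, hB, hli, ← h2, mul_inv_rev]
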